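/- With X normal Hausdorff and Y ⊆ C_b(X) a Banach space with ‖·‖ ≥ ‖·‖_∞ satisfying property (H): if f is the constant function c ∈ ℝ on X, then F(c)(Q) = c for all Q in the weak*-closed convex hull of Δ_Y(X), and F(c)(Q) = +∞ for Q outside it. In particular every Q in the weak*-closed convex hull of Δ_Y(X) satisfies Q(φ) ≤ sup_{x∈X} φ(x) for all φ ∈ Y. -/

import Mathlib

open BoundedContinuousFunction

/-- The transform `F(f)(Q) = sup_{φ ∈ Y} (Q(φ) − f^×(φ))`. -/
noncomputable def FTransform {X : Type*} [TopologicalSpace X]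
    {Y : Type*} [NormedAddCommGroup Y] [NormedSpace ℝ Y]
    (j : Y →ₗ[ℝ] (X →ᵇ ℝ)) (f : X → EReal) (Q : WeakDual ℝ Y) : EReal :=
  ⨆ φ : Y, ((Q φ : EReal) - ⨆ x : X, ((j φ x : EReal) - f x))

/-- coe of a real ciSup into `EReal`. -/
lemma ereal_ciSup_coe {X : Type*} [Nonempty X] (g : X → ℝ) (hb : BddAbove (Set.range g)) :
    (⨆ x, (g x : EReal)) = ((⨆ x, g x : ℝ) : EReal) := by
  apply le_antisymm
  · exact iSup_le fun x => EReal.coe_le_coe_iff.2 (le_ciSup hb x)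
  · apply le_of_forall_lt
    intro b hb'
    induction b with
    | bot =>
      exact lt_of_lt_of_le (by simp) (le_iSup (fun x => ((g x : EReal))) (Classical.arbitrary X))
    | coe r =>
      obtain ⟨x, hx⟩ := exists_lt_of_lt_ciSup (EReal.coe_lt_coe_iff.1 hb')
      exact lt_of_lt_of_le (EReal.coe_lt_coe_iff.2 hx) (le_iSup (fun x => ((g x : EReal))) x)
    | top => exact absurd hb' (by simp)

instance weakDual_locallyConvex {Y : Type*} [NormedAddCommGroup Y] [NormedSpace ℝ Y] :
    LocallyConvexSpace ℝ (WeakDual ℝ Y) :=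
  WeakBilin.locallyConvexSpace

/-- Every continuous linear functional on the weak-* dual is evaluation at a point. -/
lemma weakDual_dual_eval {Y : Type*} [NormedAddCommGroup Y] [NormedSpace ℝ Y]
    (L : WeakDual ℝ Y →L[ℝ] ℝ) : ∃ ψ : Y, ∀ Q : WeakDual ℝ Y, L Q = Q ψ := by
  classical
  have hV : L ⁻¹' (Set.Ioo (-1 : ℝ) 1) ∈ nhds (0 : WeakDual ℝ Y) := by
    apply L.continuous.continuousAt.preimage_mem_nhds
    simp [isOpen_Ioo.mem_nhds, map_zero]
  have hnhds : nhds (0 : WeakDual ℝ Y)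
      = Filter.comap (fun (Q : WeakDual ℝ Y) (y : Y) => Q y) (nhds 0) := by
    have := nhds_induced (fun (Q : WeakDual ℝ Y) (y : Y) => Q y) 0
    exact this
  rw [hnhds, Filter.mem_comap] at hV
  obtain ⟨W, hW, hWsub⟩ := hV
  rw [nhds_pi, Filter.mem_pi] at hW
  obtain ⟨I, hIfin, t, ht, htsub⟩ := hW
  -- if Q vanishes on I then L Q = 0
  have hker : ∀ Q : WeakDual ℝ Y, (∀ φ ∈ I, Q φ = 0) → L Q = 0 := by
    intro Q hQ
    by_contra h0
    have hmem : (2 / L Q) • Q ∈ L ⁻¹' (Set.Ioo (-1 : ℝ) 1) := by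
      apply hWsub; apply htsub
      rw [Set.mem_pi]
      intro φ hφ
      have h1 : ((2 / L Q) • Q) φ = (2 / L Q) * Q φ := rfl
      show ((2 / L Q) • Q) φ ∈ t φ
      rw [h1, hQ φ hφ, mul_zero]
      simpa using mem_of_mem_nhds (ht φ)
    have : L ((2 / L Q) • Q) = 2 := by
      simp [map_smul, div_mul_cancel₀, h0]
    rw [Set.mem_preimage, this] at hmem
    exact absurd hmem.2 (by norm_num)
  -- the evaluation bilinear map
  let e : Y →ₗ[ℝ] (WeakDual ℝ Y →ₗ[ℝ] ℝ) :=
    { toFun := fun ψ =>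
        { toFun := fun Q => Q ψ
          map_add' := fun Q Q' => rfl
          map_smul' := fun r Q => rfl }
      map_add' := fun ψ ψ' => by ext Q; exact map_add Q ψ ψ'
      map_smul' := fun r ψ => by ext Q; exact map_smul Q r ψ }
  have : Finite I := hIfin.to_subtype
  have hspan : (L : WeakDual ℝ Y →ₗ[ℝ] ℝ) ∈
      Submodule.span ℝ (Set.range fun i : I => e i.val) := by
    apply mem_span_of_iInf_ker_le_ker
    intro Q hQ
    simp only [Submodule.mem_iInf, LinearMap.mem_ker] at hQ
    exact hker Q fun φ hφ => hQ ⟨φ, hφ⟩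
  have hrange : (L : WeakDual ℝ Y →ₗ[ℝ] ℝ) ∈ LinearMap.range e := by
    refine Submodule.span_le.2 ?_ hspan
    rintro _ ⟨i, rfl⟩
    exact ⟨i.val, rfl⟩
  obtain ⟨ψ, hψ⟩ := hrange
  exact ⟨ψ, fun Q => by
    have := congrFun (congrArg DFunLike.coe hψ) Q
    exact this.symm⟩

/-- Evaluation at a point as an element of the weak dual. -/
noncomputable def evalDelta {X : Type*} [TopologicalSpace X] {Y : Type*}
    [NormedAddCommGroup Y] [NormedSpace ℝ Y] (j : Y →ₗ[ℝ] (X →ᵇ ℝ))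
    (hnorm : ∀ φ : Y, ‖j φ‖ ≤ ‖φ‖) (x : X) : WeakDual ℝ Y :=
  LinearMap.mkContinuous
    { toFun := fun φ => j φ x
      map_add' := fun φ ψ => by simp
      map_smul' := fun r φ => by simp }
    1 (fun φ => by
      simpa using (((j φ).norm_coe_le_norm x).trans (hnorm φ)))

theorem FTransform_const
    {X : Type*} [TopologicalSpace X] [T2Space X] [NormalSpace X] [Nonempty X]
    (Y : Type*) [NormedAddCommGroup Y] [NormedSpace ℝ Y] [CompleteSpace Y]
    (j : Y →ₗ[ℝ] (X →ᵇ ℝ)) (hj : Function.Injective j)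
    (hnorm : ∀ φ : Y, ‖j φ‖ ≤ ‖φ‖)
    (hH : ∀ x : X, ∀ U : Set X, IsOpen U → x ∈ U →
      ∃ σ : Y, (∀ y, j σ y ∈ Set.Icc (0 : ℝ) 1) ∧ j σ x = 1 ∧ ∀ y ∉ U, j σ y = 0)
    (c : ℝ) :
    ∃ Δ : X → WeakDual ℝ Y, (∀ (x : X) (φ : Y), Δ x φ = j φ x) ∧
      (∀ Q ∈ closure (convexHull ℝ (Set.range Δ)),
        FTransform j (fun _ => (c : EReal)) Q = (c : EReal) ∧
        ∀ φ : Y, (Q φ : EReal) ≤ ⨆ x : X, (j φ x : EReal)) ∧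
      (∀ Q : WeakDual ℝ Y, Q ∉ closure (convexHull ℝ (Set.range Δ)) →
        FTransform j (fun _ => (c : EReal)) Q = ⊤) := by
  classical
  set Δ : X → WeakDual ℝ Y := fun x => evalDelta j hnorm x with hΔdef
  have hΔapp : ∀ (x : X) (φ : Y), Δ x φ = j φ x := fun x φ => rfl
  set S : Set (WeakDual ℝ Y) := closure (convexHull ℝ (Set.range Δ)) with hSdef
  -- boundedness and real sups
  have hbdd : ∀ φ : Y, BddAbove (Set.range fun x => j φ x) := fun φ =>
    ⟨‖j φ‖, by rintro _ ⟨x, rfl⟩; exact (le_abs_self _).trans ((j φ).norm_coe_le_norm x)⟩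
  set M : Y → ℝ := fun φ => ⨆ x, j φ x with hMdef
  have hM_le : ∀ (φ : Y) (x : X), j φ x ≤ M φ := fun φ x => le_ciSup (hbdd φ) x
  have hbdd' : ∀ φ : Y, BddAbove (Set.range fun x => j φ x - c) := fun φ =>
    ⟨M φ - c, by rintro _ ⟨x, rfl⟩; exact sub_le_sub_right (hM_le φ x) c⟩
  have hMc : ∀ φ : Y, (⨆ x, (j φ x - c)) = M φ - c := by
    intro φ
    apply le_antisymm (ciSup_le fun x => sub_le_sub_right (hM_le φ x) c)
    rw [sub_le_iff_le_add]
    exact ciSup_le fun x => by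
      have := le_ciSup (hbdd' φ) x
      linarith
  -- rewrite FTransform
  have hFT : ∀ Q : WeakDual ℝ Y,
      FTransform j (fun _ => (c : EReal)) Q = ⨆ φ : Y, ((Q φ - M φ + c : ℝ) : EReal) := by
    intro Q
    unfold FTransform
    apply iSup_congr
    intro φ
    have h1 : (⨆ x : X, ((j φ x : EReal) - ((fun _ => (c : EReal)) x)))
        = ((M φ - c : ℝ) : EReal) := by
      have : ∀ x : X, ((j φ x : EReal) - ((fun _ => (c : EReal)) x))
          = ((j φ x - c : ℝ) : EReal) := fun x => by
        simp [EReal.coe_sub]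
      rw [iSup_congr this, ereal_ciSup_coe _ (hbdd' φ), hMc φ]
    rw [h1, ← EReal.coe_sub]
    norm_cast
    ring
  -- S ⊆ C
  have hC : ∀ Q ∈ S, ∀ φ : Y, Q φ ≤ M φ := by
    have hCclosed : IsClosed {Q : WeakDual ℝ Y | ∀ φ : Y, Q φ ≤ M φ} := by
      have : {Q : WeakDual ℝ Y | ∀ φ : Y, Q φ ≤ M φ}
          = ⋂ φ : Y, {Q : WeakDual ℝ Y | Q φ ≤ M φ} := by
        ext Q; simp [Set.mem_iInter]
      rw [this]
      exact isClosed_iInter fun φ =>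
        IsClosed.preimage (WeakDual.eval_continuous φ) isClosed_Iic
    have hCconv : Convex ℝ {Q : WeakDual ℝ Y | ∀ φ : Y, Q φ ≤ M φ} := by
      intro Q hQ Q' hQ' a b ha hb hab
      intro φ
      have : (a • Q + b • Q') φ = a * Q φ + b * Q' φ := rfl
      rw [this]
      calc a * Q φ + b * Q' φ ≤ a * M φ + b * M φ := by
            gcongr <;> [exact hQ φ; exact hQ' φ]
        _ = M φ := by rw [← add_mul, hab, one_mul]
    intro Q hQ
    refine closure_minimal (convexHull_min ?_ hCconv) hCclosed hQ
    rintro _ ⟨x, rfl⟩ φ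
    exact hM_le φ x
  refine ⟨Δ, hΔapp, ?_, ?_⟩
  · intro Q hQ
    constructor
    · rw [hFT Q]
      apply le_antisymm
      · exact iSup_le fun φ => EReal.coe_le_coe_iff.2 (by
          have := hC Q hQ φ; linarith)
      · have h0 : ((Q 0 - M 0 + c : ℝ) : EReal) = (c : EReal) := by
          have hM0 : M 0 = 0 := by
            simp only [hMdef, map_zero]
            simpa using ciSup_const (a := (0:ℝ)) (ι := X)
          simp [hM0, map_zero]
        exact h0 ▸ le_iSup (fun φ : Y => ((Q φ - M φ + c : ℝ) : EReal)) 0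
    · intro φ
      rw [ereal_ciSup_coe _ (hbdd φ)]
      exact EReal.coe_le_coe_iff.2 (hC Q hQ φ)
  · intro Q hQ
    -- separation
    obtain ⟨f, u, hfS, hfQ⟩ := geometric_hahn_banach_closed_point
      (convex_convexHull ℝ (Set.range Δ)).closure isClosed_closure hQ
    obtain ⟨ψ, hψ⟩ := weakDual_dual_eval f
    have hMψ : M ψ ≤ u := by
      apply ciSup_le
      intro x
      have : Δ x ∈ S := subset_closure (subset_convexHull ℝ _ (Set.mem_range_self x))
      have := hfS _ this
      rw [hψ (Δ x)] at this
      exact le_of_lt this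
    have hQψ : u < Q ψ := by rw [← hψ Q]; exact hfQ
    set d : ℝ := Q ψ - M ψ with hd
    have hdpos : 0 < d := by simp only [hd]; linarith
    rw [hFT Q]
    rw [iSup_eq_top]
    intro b hb
    induction b with
    | bot =>
      exact ⟨0, EReal.bot_lt_coe _⟩
    | coe r =>
      set t : ℝ := (|r - c| + 1) / d with htdef
      have ht0 : 0 ≤ t := le_of_lt (div_pos (by positivity) hdpos)
      have htd : t * d = |r - c| + 1 := div_mul_cancel₀ _ (ne_of_gt hdpos)
      refine ⟨t • ψ, ?_⟩
      rw [EReal.coe_lt_coe_iff]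
      have hQt : Q (t • ψ) = t * Q ψ := by simp [map_smul]
      have hMt : M (t • ψ) ≤ t * M ψ := by
        apply ciSup_le
        intro x
        have : j (t • ψ) x = t * j ψ x := by simp [map_smul]
        rw [this]
        exact mul_le_mul_of_nonneg_left (hM_le ψ x) ht0
      have h3 : t * Q ψ - t * M ψ = t * d := by rw [hd]; ring
      have h4 : r < t * Q ψ - t * M ψ + c := by
        rw [h3, htd]
        have := le_abs_self (r - c); linarith
      rw [hQt]
      linarith [hMt, h4]
    | top => exact absurd hb (lt_irrefl _)
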